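/- Suppose d ≥ 5·max{a_0,…,a_{n+1}} and let f ∈ S be a nonzero weighted-homogeneous quasismooth polynomial of degree d. Let β ∈ Aut(S) be a diagonal graded automorphism, β(x_i) = c_i·x_i with c_i ∈ ℂ^×, satisfying β(f) = c·f for some c ∈ ℂ^×. Define Γ to be the (finite) set of pairs (i, y) where i ∈ {0,…,n+1} and y is a monomial of weighted degree a_i with β(y) ≠ c_i·y. If Γ is nonempty, then the number of monomials of weighted degree d whose coefficient in f is zero is at least |Γ| + 1. -/

import Mathlib

open MvPolynomial

noncomputable section

/-- Quasismoothness of the hypersurface `{f = 0}`: the punctured affine cone is smooth, i.e.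
at every nonzero point of the affine cone some partial derivative of `f` is nonzero. -/
def Quasismooth {n : ℕ} (f : MvPolynomial (Fin (n + 2)) ℂ) : Prop :=
  ∀ x : Fin (n + 2) → ℂ, x ≠ 0 → eval x f = 0 → ∃ i, eval x (pderiv i f) ≠ 0

section AuxiliaryLemmas

open Finsupp
set_option linter.unusedSectionVars false
set_option maxHeartbeats 1000000

variable {N : Type*} [Fintype N] [DecidableEq N]

def chiU (c : N → ℂˣ) (m : N →₀ ℕ) : ℂˣ := m.prod fun j e => (c j) ^ e

lemma chiU_add (c : N → ℂˣ) (m m' : N →₀ ℕ) : chiU c (m + m') = chiU c m * chiU c m' :=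
  Finsupp.prod_add_index' (fun _ => pow_zero _) (fun _ _ _ => pow_add _ _ _)

lemma chiU_single (c : N → ℂˣ) (j : N) (e : ℕ) : chiU c (Finsupp.single j e) = (c j) ^ e :=
  Finsupp.prod_single_index (pow_zero _)

lemma chiU_smul (c : N → ℂˣ) (s : ℕ) (m : N →₀ ℕ) : chiU c (s • m) = (chiU c m) ^ s := by
  induction s with
  | zero => simp [chiU]
  | succ t ih => rw [succ_nsmul, chiU_add, ih, pow_succ]

lemma weight_single' (a : N → ℕ) (j : N) (e : ℕ) :
    Finsupp.weight a (Finsupp.single j e) = e * a j := by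
  simp [Finsupp.weight_apply, Finsupp.sum_single_index]

lemma weight_erase_eq (a : N → ℕ) (m : N →₀ ℕ) (j : N) :
    Finsupp.weight a m = m j * a j + Finsupp.weight a (m.erase j) := by
  conv_lhs => rw [← Finsupp.single_add_erase j m]
  rw [map_add, weight_single']

lemma coord_mul_le_weight (a : N → ℕ) (m : N →₀ ℕ) (j : N) :
    m j * a j ≤ Finsupp.weight a m := by
  rw [weight_erase_eq a m j]; omega

lemma two_coord_le_weight (a : N → ℕ) (m : N →₀ ℕ) {j w : N} (h : j ≠ w) :
    m j * a j + m w * a w ≤ Finsupp.weight a m := by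
  rw [weight_erase_eq a m j]
  have h2 := coord_mul_le_weight a (m.erase j) w
  rw [Finsupp.erase_ne (Ne.symm h)] at h2
  omega

lemma eq_single_of_weight_le (a : N → ℕ) (ha : ∀ i, 0 < a i) (m : N →₀ ℕ) (j : N)
    (h : Finsupp.weight a m ≤ m j * a j) : m = Finsupp.single j (m j) := by
  have h2 := weight_erase_eq a m j
  have h3 : Finsupp.weight a (m.erase j) = 0 := by omega
  have hnt : Finsupp.NonTorsionWeight ℕ a := Finsupp.nonTorsionWeight_of ℕ (w := a) (fun i => (ha i).ne')
  have h4 : m.erase j = 0 := (Finsupp.weight_eq_zero_iff_eq_zero a).mp h3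
  conv_lhs => rw [← Finsupp.single_add_erase j m]
  rw [h4, add_zero]

lemma extra_exists
    (a : N → ℕ) (ha : ∀ i, 0 < a i) (d A : ℕ) (hA : ∀ i, a i ≤ A) (hd : 5 * A ≤ d)
    (c : N → ℂˣ) (c₀ : ℂˣ) (k : N → ℕ) (E : N → (N →₀ ℕ))
    (hE : ∀ t, E t = 0 ∨ ∃ j, j ≠ t ∧ E t = Finsupp.single j 1)
    (hwP : ∀ t, k t * a t + Finsupp.weight a (E t) = d)
    (hcP : ∀ t, (c t) ^ (k t) * chiU c (E t) = c₀)
    (i : N) (y : N →₀ ℕ) (hyw : Finsupp.weight a y = a i) (hyc : chiU c y ≠ c i) :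
    ∃ m : N →₀ ℕ, Finsupp.weight a m = d ∧ chiU c m ≠ c₀ ∧
      ∀ t, ¬(Finsupp.single t (k t - 1) + E t ≤ m) := by
  have wE_le : ∀ t, Finsupp.weight a (E t) ≤ A := by
    intro t
    rcases hE t with h | ⟨j, hj, h⟩
    · rw [h, map_zero]; omega
    · rw [h, weight_single', one_mul]; exact hA j
  have hk4 : ∀ t, 4 ≤ k t := by
    intro t
    by_contra hk
    have h1 : k t ≤ 3 := by omega
    have h2 : k t * a t ≤ 3 * a t := Nat.mul_le_mul_right _ h1
    have h3 := hwP t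
    have h4 := wE_le t
    have h5 := hA t
    have h6 := ha t
    omega
  have Eww : ∀ t, (E t) t = 0 := by
    intro t
    rcases hE t with h | ⟨j, hj, h⟩
    · rw [h]; rfl
    · rw [h, Finsupp.single_apply, if_neg hj]
  have Ele1 : ∀ t x, (E t) x ≤ 1 := by
    intro t x
    rcases hE t with h | ⟨j, hj, h⟩
    · rw [h]; simp
    · rw [h, Finsupp.single_apply]; split <;> omega
  have Esingle : ∀ t x, (E t) x = 1 → E t = Finsupp.single x 1 := by
    intro t x hx
    rcases hE t with h | ⟨j, hj, h⟩
    · rw [h] at hx; simp at hx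
    · rw [h] at hx ⊢
      rw [Finsupp.single_apply] at hx
      split at hx
      · next hjx => rw [hjx]
      · simp at hx
  have sap : ∀ (x : N) (b : ℕ) (z : N), x ≠ z → (Finsupp.single x b) z = 0 := by
    intro x b z h; rw [Finsupp.single_apply, if_neg h]
  by_cases hC : ∃ t j, E t = Finsupp.single j 1 ∧ a j = a t ∧ c j ≠ c t
  · obtain ⟨t, j, hEt, haj, hcj⟩ := hC
    have hjt : j ≠ t := by
      intro h; rw [h] at hEt; have := Eww t; rw [hEt, Finsupp.single_eq_same] at this; omega
    refine ⟨Finsupp.single t (k t + 1), ?_, ?_, ?_⟩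
    · rw [weight_single']
      have h1 := hwP t
      rw [hEt, weight_single', one_mul] at h1
      have : (k t + 1) * a t = k t * a t + a t := by ring
      omega
    · rw [chiU_single]
      intro h
      rw [← hcP t, hEt, chiU_single, pow_one, pow_succ] at h
      exact hcj (mul_left_cancel h).symm
    · intro w hle
      rw [Finsupp.le_def] at hle
      by_cases hwt : w = t
      · subst hwt
        have := hle j
        rw [Finsupp.add_apply, Finsupp.single_apply, if_neg (fun h => hjt h.symm), hEt,
          Finsupp.single_eq_same, Finsupp.single_apply, if_neg (fun h => hjt h.symm)] at this
        omega
      · have := hle w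
        rw [Finsupp.add_apply, Finsupp.single_eq_same, Eww w,
          Finsupp.single_apply, if_neg (fun h => hwt h.symm)] at this
        have := hk4 w
        omega
  · push_neg at hC
    -- y i = 0 and basic facts about y
    have hyi : y i = 0 := by
      by_contra hyi
      have h1 := coord_mul_le_weight a y i
      rw [hyw] at h1
      have h2 : y i ≤ 1 := by
        by_contra h2
        have : 2 * a i ≤ y i * a i := Nat.mul_le_mul_right _ (by omega)
        have := ha i
        omega
      have h3 : y i = 1 := by omega
      have h4 : y = Finsupp.single i (y i) :=
        eq_single_of_weight_le a ha y i (by rw [hyw, h3, one_mul])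
      rw [h4, h3, chiU_single, pow_one] at hyc
      exact hyc rfl
    set r : ℂˣ := chiU c y * (c i)⁻¹ with hr
    have hr1 : r ≠ 1 := by
      rw [hr]
      intro h
      exact hyc (by rwa [mul_inv_eq_one] at h)
    -- choose s
    obtain ⟨s, hs2, hs3, hrs⟩ : ∃ s : ℕ, 2 ≤ s ∧ (s = 2 ∨ s = 3) ∧ r ^ s ≠ 1 := by
      by_cases hr2 : r ^ 2 = 1
      · exact ⟨3, by omega, Or.inr rfl, by
          rw [pow_succ, hr2, one_mul]; exact hr1⟩
      · exact ⟨2, le_refl _, Or.inl rfl, hr2⟩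
    refine ⟨Finsupp.single i (k i - s) + s • y + E i, ?_, ?_, ?_⟩
    · rw [map_add, map_add, weight_single', map_nsmul, hyw, smul_eq_mul]
      have h1 := hwP i
      have h2 : (k i - s) * a i + s * a i = k i * a i := by
        rw [← Nat.add_mul, Nat.sub_add_cancel (by have := hk4 i; omega)]
      omega
    · rw [chiU_add, chiU_add, chiU_single, chiU_smul]
      intro h
      rw [← hcP i] at h
      have h2 : (c i) ^ (k i - s) * chiU c y ^ s = (c i) ^ k i :=
        mul_right_cancel h
      have h3 : (c i : ℂˣ) ^ k i = (c i) ^ (k i - s) * (c i) ^ s := by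
        rw [← pow_add, Nat.sub_add_cancel (by have := hk4 i; omega)]
      rw [h3] at h2
      have h4 : chiU c y ^ s = (c i) ^ s := mul_left_cancel h2
      apply hrs
      rw [hr, mul_pow, h4, inv_pow, mul_inv_cancel]
    · -- freeness
      intro w hle
      rw [Finsupp.le_def] at hle
      have hlew := hle w
      simp only [Finsupp.add_apply, Finsupp.smul_apply, smul_eq_mul,
        Finsupp.single_eq_same, Eww w] at hlew
      by_cases hwi : w = i
      · subst hwi
        rw [Finsupp.single_eq_same, hyi, Eww w] at hlew
        have := hk4 w
        omega
      · rw [Finsupp.single_apply, if_neg (fun h => hwi h.symm)] at hlew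
        -- hlew : k w - 1 + 0 ≤ 0 + s * y w + (E i) w
        set ι := (E i) w with hι
        have hι1 : ι ≤ 1 := Ele1 i w
        have hyw1 : 1 ≤ y w := by
          by_contra hyw1
          have : y w = 0 := by omega
          rw [this] at hlew
          have := hk4 w
          omega
        have haw_le : y w * a w ≤ a i := by
          have := coord_mul_le_weight a y w; rwa [hyw] at this
        have haw_le2 : a w ≤ y w * a w := Nat.le_mul_of_pos_left _ (by omega)
        have hkw : k w ≤ s * y w + ι + 1 := by have := hk4 w; omega
        have hkwm : k w * a w ≤ s * (y w * a w) + ι * a w + a w := by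
          calc k w * a w ≤ (s * y w + ι + 1) * a w := Nat.mul_le_mul_right _ hkw
            _ = s * (y w * a w) + ι * a w + a w := by ring
        have hιm : ι * a w ≤ a w := by
          calc ι * a w ≤ 1 * a w := Nat.mul_le_mul_right _ hι1
            _ = a w := one_mul _
        have hwPw := hwP w
        have hwEw := wE_le w
        have hAi := hA i
        have hAw := hA w
        have haw0 := ha w
        have hai0 := ha i
        -- helper to conclude: E i = single w 1 ∧ a w = a i  and y = single w 1 leads to contradiction
        have finish1 : ι = 1 → a w = a i → y w * a w = a w → False := by
          intro hι1' hawai hyww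
          have hEi : E i = Finsupp.single w 1 := Esingle i w (by rw [← hι]; exact hι1')
          have hyw' : y w = 1 := by
            have := Nat.eq_of_mul_eq_mul_right haw0 (by rw [hyww, one_mul] : y w * a w = 1 * a w)
            omega
          have hysingle : y = Finsupp.single w (y w) :=
            eq_single_of_weight_le a ha y w (by rw [hyw]; omega)
          have hcy : chiU c y = c w := by rw [hysingle, hyw', chiU_single, pow_one]
          exact hyc (by rw [hcy]; exact hC i w hEi hawai)
        rcases hs3 with hs | hs
        · -- s = 2
          subst hs
          have key : y w * a w = a i ∧ ι * a w = a w ∧ a w = a i ∧ a i = A := by omega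
          obtain ⟨k1, k2, k3, k4⟩ := key
          have hι' : ι = 1 := by
            rcases Nat.le_one_iff_eq_zero_or_eq_one.mp hι1 with h | h
            · rw [h, zero_mul] at k2; omega
            · exact h
          exact finish1 hι' k3 (by omega)
        · -- s = 3
          subst hs
          by_cases hyw2 : 2 ≤ y w
          · -- y w ≥ 2
            have h2aw : 2 * a w ≤ y w * a w := Nat.mul_le_mul_right _ hyw2
            have key : y w * a w = a i ∧ ι * a w = a w ∧ 2 * a w = a i ∧ a i = A ∧ d = 5 * A := by
              omega
            obtain ⟨k1, k2, k3, k4, k5⟩ := key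
            have hι' : ι = 1 := by
              rcases Nat.le_one_iff_eq_zero_or_eq_one.mp hι1 with h | h
              · rw [h, zero_mul] at k2; omega
              · exact h
            have hEi : E i = Finsupp.single w 1 := Esingle i w (by rw [← hι]; exact hι')
            have hwPi := hwP i
            rw [hEi, weight_single', one_mul] at hwPi
            -- k i * a i + a w = d,  a i = 2 a w,  d = 5 a i = 10 a w
            have hq : k i * a i = 2 * (k i * a w) := by
              rw [← k3]; ring
            rcases le_or_gt (k i) 4 with hki | hki
            · have : k i * a w ≤ 4 * a w := Nat.mul_le_mul_right _ hki
              omega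
            · have : 5 * a w ≤ k i * a w := Nat.mul_le_mul_right _ hki
              omega
          · -- y w = 1
            have hyw1' : y w = 1 := by omega
            rw [hyw1', mul_one] at hlew
            have hkw45 : k w = 4 ∨ (k w = 5 ∧ ι = 1) := by
              have := hk4 w
              rcases Nat.le_one_iff_eq_zero_or_eq_one.mp hι1 with h | h
              · left; omega
              · omega
            have hawai : a w ≤ a i := by omega
            rcases hkw45 with hkweq | ⟨hkweq, hι'⟩
            · -- k w = 4
              rw [hkweq] at hwPw
              have key : a w = A ∧ a i = A ∧ Finsupp.weight a (E w) = A ∧ d = 5 * A := by omega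
              obtain ⟨k1, k2, k3, k4⟩ := key
              have hysingle : y = Finsupp.single w (y w) :=
                eq_single_of_weight_le a ha y w (by rw [hyw]; omega)
              have hcy : chiU c y = c w := by rw [hysingle, hyw1', chiU_single, pow_one]
              have hcwi : c w ≠ c i := by rw [← hcy]; exact hyc
              rcases hE w with hEw0 | ⟨j', hj'w, hEw⟩
              · rw [hEw0, map_zero] at k3; omega
              · have haj' : a j' = A := by
                  rw [hEw, weight_single', one_mul] at k3; exact k3
                by_cases hcj' : c j' = c w
                · by_cases hj'i : j' = i
                  · exact hcwi (by rw [← hcj', hj'i])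
                  · have hlej := hle j'
                    rw [Finsupp.add_apply, Finsupp.add_apply, Finsupp.add_apply,
                      Finsupp.smul_apply, smul_eq_mul] at hlej
                    rw [sap w (k w - 1) j' (Ne.symm hj'w)] at hlej
                    rw [hEw, Finsupp.single_eq_same] at hlej
                    have hyj' : y j' = 0 := by
                      rw [hysingle, hyw1']; exact sap w 1 j' (Ne.symm hj'w)
                    rw [hyj', mul_zero] at hlej
                    rw [sap i (k i - 3) j' (Ne.symm hj'i)] at hlej
                    have hEij' : (E i) j' = 1 := by
                      have := Ele1 i j'; omega
                    have hEi : E i = Finsupp.single j' 1 := Esingle i j' hEij'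
                    have := hC i j' hEi (by omega)
                    rw [hcj'] at this
                    exact hcwi this
                · exact hcj' (hC w j' hEw (by omega))
            · -- k w = 5, ι = 1
              rw [hkweq] at hwPw
              have hEi : E i = Finsupp.single w 1 := Esingle i w (by rw [← hι]; exact hι')
              have hwPi := hwP i
              rw [hEi, weight_single', one_mul] at hwPi
              rcases hE w with hEw0 | ⟨j', hj'w, hEw⟩
              · -- E w = 0 : 5 a w = d
                rw [hEw0, map_zero] at hwPw
                have key : a w = A ∧ a i = A := by omega
                obtain ⟨k1, k2⟩ := key
                have hysingle : y = Finsupp.single w (y w) :=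
                  eq_single_of_weight_le a ha y w (by rw [hyw]; omega)
                have hcy : chiU c y = c w := by rw [hysingle, hyw1', chiU_single, pow_one]
                exact (by rw [← hcy]; exact hyc : c w ≠ c i) (hC i w hEi (by omega))
              · -- E w = single j' 1 : d = 5 a w + a j'
                rw [hEw, weight_single', one_mul] at hwPw
                have hlej := hle j'
                rw [Finsupp.add_apply, Finsupp.add_apply, Finsupp.add_apply,
                  Finsupp.smul_apply, smul_eq_mul] at hlej
                rw [sap w (k w - 1) j' (Ne.symm hj'w)] at hlej
                rw [hEw, Finsupp.single_eq_same] at hlej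
                rw [hEi, sap w 1 j' (Ne.symm hj'w)] at hlej
                by_cases hj'i : j' = i
                · rw [hj'i] at hwPw
                  -- k i * a i + a w = d = 5 a w + a i
                  rcases le_or_gt (k i) 4 with hki | hki
                  · have hki4 : k i = 4 := by have := hk4 i; omega
                    rw [hki4] at hwPi
                    omega
                  · have h5 : 5 * a i ≤ k i * a i := Nat.mul_le_mul_right _ hki
                    have haiaw : a i = a w := by omega
                    have hysingle : y = Finsupp.single w (y w) :=
                      eq_single_of_weight_le a ha y w (by rw [hyw]; omega)
                    have hcy : chiU c y = c w := by rw [hysingle, hyw1', chiU_single, pow_one]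
                    exact (by rw [← hcy]; exact hyc : c w ≠ c i) (hC i w hEi (by omega))
                · rw [sap i (k i - 3) j' (Ne.symm hj'i)] at hlej
                  have hyj' : 1 ≤ y j' := by omega
                  have htwo := two_coord_le_weight a y (hj'w : j' ≠ w)
                  rw [hyw] at htwo
                  have h1 : a j' ≤ y j' * a j' := Nat.le_mul_of_pos_left _ (by omega)
                  have hj'0 := ha j'
                  have hAj' := hA j'
                  rw [hyw1', one_mul] at htwo
                  omega

lemma chiU_coe (c : N → ℂˣ) (m : N →₀ ℕ) :
    ((chiU c m : ℂˣ) : ℂ) = m.prod fun j e => ((c j : ℂ)) ^ e := by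
  rw [chiU, Finsupp.prod, Finsupp.prod]
  push_cast
  rfl

lemma aeval_diag (c : N → ℂˣ) (f : MvPolynomial N ℂ) (m : N →₀ ℕ) :
    coeff m (aeval (fun i => ((c i : ℂ)) • (X i : MvPolynomial N ℂ)) f)
      = (m.prod fun j e => ((c j : ℂ)) ^ e) * coeff m f := by
  have key : ∀ d : N →₀ ℕ, ∀ r : ℂ,
      (aeval (fun i => ((c i : ℂ)) • (X i : MvPolynomial N ℂ)) (monomial d r) : MvPolynomial N ℂ)
        = C (d.prod fun j e => ((c j : ℂ)) ^ e) * monomial d r := by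
    intro d r
    rw [aeval_monomial]
    have h1 : (d.prod fun n e => (((c n : ℂ)) • (X n : MvPolynomial N ℂ)) ^ e)
        = C (d.prod fun j e => ((c j : ℂ)) ^ e) * (d.prod fun n e => (X n : MvPolynomial N ℂ) ^ e) := by
      rw [Finsupp.prod, Finsupp.prod, Finsupp.prod, map_prod, ← Finset.prod_mul_distrib]
      refine Finset.prod_congr rfl fun j _ => ?_
      rw [smul_pow, smul_eq_C_mul, C_pow]
    rw [h1, algebraMap_eq, monomial_eq]
    ring
  conv_lhs => rw [f.as_sum, map_sum, Finset.sum_congr rfl fun d _ => key d (coeff d f)]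
  rw [coeff_sum]
  simp only [coeff_C_mul, coeff_monomial]
  rw [Finset.sum_eq_single m]
  · simp
  · intro b _ hbm; simp [hbm]
  · intro hm; simp [MvPolynomial.notMem_support_iff.mp hm]

lemma pivot_exists {n : ℕ} (a : Fin (n+2) → ℕ) (ha : ∀ i, 0 < a i)
    (d : ℕ) (hd5 : ∀ i, 5 * a i ≤ d)
    (f : MvPolynomial (Fin (n+2)) ℂ)
    (hfh : f.IsWeightedHomogeneous a d) (hq : Quasismooth f) (t : Fin (n+2)) :
    ∃ (k : ℕ) (E : Fin (n+2) →₀ ℕ), 1 ≤ k ∧ coeff (Finsupp.single t k + E) f ≠ 0 ∧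
      (E = 0 ∨ ∃ j, j ≠ t ∧ E = Finsupp.single j 1) := by
  classical
  have hd0 : 0 < d := lt_of_lt_of_le (by have := ha t; omega) (hd5 t)
  set p : Fin (n+2) → ℂ := fun w => if w = t then 1 else 0 with hp
  have hp0 : p ≠ 0 := by
    intro h
    have : p t = 0 := by rw [h]; rfl
    simp [hp] at this
  -- helper: a monomial evaluating to nonzero at p is supported at t
  have supp_sub : ∀ m : Fin (n+2) →₀ ℕ, (∏ i ∈ m.support, p i ^ m i) ≠ 0 →
      m = Finsupp.single t (m t) := by
    intro m hprod
    apply Finsupp.support_subset_singleton.mp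
    intro w hw
    simp only [Finset.mem_singleton]
    by_contra hwt
    apply hprod
    apply Finset.prod_eq_zero hw
    have : p w = 0 := by simp [hp, hwt]
    rw [this, zero_pow]
    exact Finsupp.mem_support_iff.mp hw
  by_cases h0 : eval p f = 0
  · -- use quasismoothness
    obtain ⟨j, hj⟩ := hq p hp0 h0
    have hpd : pderiv j f = ∑ m ∈ f.support, monomial (m - Finsupp.single j 1) (coeff m f * m j) := by
      conv_lhs => rw [f.as_sum, map_sum]
      exact Finset.sum_congr rfl fun m _ => pderiv_monomial
    rw [hpd, map_sum] at hj
    obtain ⟨m, hmsup, hm⟩ := Finset.exists_ne_zero_of_sum_ne_zero hj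
    rw [eval_monomial] at hm
    rw [Finsupp.prod] at hm
    set m' : Fin (n+2) →₀ ℕ := m - Finsupp.single j 1 with hm'def
    have hmj : m j ≠ 0 := by intro h; rw [h] at hm; simp at hm
    have hprod : (∏ i ∈ m'.support, p i ^ m' i) ≠ 0 := by
      intro h; rw [h] at hm; simp at hm
    have hsub := supp_sub _ hprod
    have hle : Finsupp.single j 1 ≤ m := Finsupp.single_le_iff.mpr (by omega)
    have hm2 : m = Finsupp.single t (m' t) + Finsupp.single j 1 := by
      conv_lhs => rw [← tsub_add_cancel_of_le hle, ← hm'def]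
      rw [← hsub]
    have hcoeff : coeff m f ≠ 0 := MvPolynomial.mem_support_iff.mp hmsup
    by_cases hjt : j = t
    · subst hjt
      refine ⟨m' j + 1, 0, by omega, ?_, Or.inl rfl⟩
      rw [add_zero, Finsupp.single_add, ← hm2]
      exact hcoeff
    · set K := m' t with hK
      have hK1 : 1 ≤ K := by
        by_contra hK0
        have hK00 : K = 0 := by omega
        have hw := hfh hcoeff
        rw [hm2, hK00, Finsupp.single_zero, zero_add] at hw
        have : Finsupp.weight a (Finsupp.single j 1) = a j := by
          rw [Finsupp.weight_apply, Finsupp.sum_single_index] <;> simp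
        rw [this] at hw
        have := hd5 j
        have := ha j
        omega
      exact ⟨K, Finsupp.single j 1, hK1, by rw [← hm2]; exact hcoeff, Or.inr ⟨j, hjt, rfl⟩⟩
  · -- f itself evaluates nonzero
    rw [eval_eq] at h0
    obtain ⟨m, hmsup, hm⟩ := Finset.exists_ne_zero_of_sum_ne_zero h0
    have hprod : (∏ i ∈ m.support, p i ^ m i) ≠ 0 := by
      intro h; rw [h] at hm; simp at hm
    have hsub := supp_sub _ hprod
    have hcoeff : coeff m f ≠ 0 := MvPolynomial.mem_support_iff.mp hmsup
    have hk1 : 1 ≤ m t := by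
      by_contra hk0
      have : m t = 0 := by omega
      rw [this, Finsupp.single_zero] at hsub
      have hw := hfh hcoeff
      rw [hsub, map_zero] at hw
      omega
    refine ⟨m t, 0, hk1, ?_, Or.inl rfl⟩
    rw [add_zero, ← hsub]; exact hcoeff

end AuxiliaryLemmas

set_option maxHeartbeats 1000000 in
/-- Let `d ≥ 5·max aᵢ` and let `f` be a nonzero quasismooth
weighted-homogeneous polynomial of degree `d` admitting the diagonal graded automorphism
`β : x_i ↦ c_i·x_i` with `β(f) = c₀·f`. Let `Γ` be the set of pairs `(i, y)` of an index `i`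
and (the exponent vector of) a monomial `y` of weighted degree `a i` with `β(y) ≠ c_i·y`.
If `Γ ≠ ∅`, then the number of monomials of weighted degree `d` with vanishing coefficient
in `f` is at least `|Γ| + 1`. -/
theorem vanishing_monomials_count {n : ℕ} (a : Fin (n + 2) → ℕ) (ha : ∀ i, 0 < a i)
    (d : ℕ) (hd : 5 * Finset.univ.sup a ≤ d)
    (f : MvPolynomial (Fin (n + 2)) ℂ) (hf0 : f ≠ 0)
    (hfh : f.IsWeightedHomogeneous a d) (hq : Quasismooth f)
    (c : Fin (n + 2) → ℂˣ) (c₀ : ℂˣ)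
    (hβ : aeval (fun i => ((c i : ℂ)) • (X i : MvPolynomial (Fin (n + 2)) ℂ)) f
      = (c₀ : ℂ) • f)
    (hΓ : {p : Fin (n + 2) × ((Fin (n + 2)) →₀ ℕ) |
        (Finsupp.weight a) p.2 = a p.1 ∧
          (p.2.prod fun j e => (c j : ℂ) ^ e) ≠ (c p.1 : ℂ)}.Nonempty) :
    {p : Fin (n + 2) × ((Fin (n + 2)) →₀ ℕ) |
        (Finsupp.weight a) p.2 = a p.1 ∧
          (p.2.prod fun j e => (c j : ℂ) ^ e) ≠ (c p.1 : ℂ)}.ncard + 1 ≤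
      {m : (Fin (n + 2)) →₀ ℕ | (Finsupp.weight a) m = d ∧ coeff m f = 0}.ncard := by
  classical
  set A := Finset.univ.sup a with hA_def
  have hA : ∀ i, a i ≤ A := fun i => Finset.le_sup (Finset.mem_univ i)
  have hA1 : 1 ≤ A := le_trans (ha 0) (hA 0)
  have hd5 : ∀ i, 5 * a i ≤ d := fun i => le_trans (by have := hA i; omega) hd
  -- character of support monomials
  have hsupp : ∀ m : Fin (n+2) →₀ ℕ, coeff m f ≠ 0 → chiU c m = c₀ := by
    intro m hm
    have h1 := aeval_diag c f m
    rw [hβ, MvPolynomial.coeff_smul, smul_eq_mul] at h1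
    have h2 : (m.prod fun j e => ((c j : ℂ)) ^ e) = (c₀ : ℂ) := (mul_right_cancel₀ hm h1).symm
    exact Units.ext (by rw [chiU_coe]; exact h2)
  -- pivots
  choose k E hk1 hcoeff hE using pivot_exists a ha d hd5 f hfh hq
  have hwP : ∀ t, k t * a t + Finsupp.weight a (E t) = d := by
    intro t
    have := hfh (hcoeff t)
    rwa [map_add, weight_single'] at this
  have hcP : ∀ t, (c t) ^ (k t) * chiU c (E t) = c₀ := by
    intro t
    have := hsupp _ (hcoeff t)
    rwa [chiU_add, chiU_single] at this
  have hk4 : ∀ t, 4 ≤ k t := by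
    intro t
    by_contra hk
    have h2 : k t * a t ≤ 3 * a t := Nat.mul_le_mul_right _ (by omega)
    have h3 := hwP t
    have h4 : Finsupp.weight a (E t) ≤ A := by
      rcases hE t with h | ⟨j, hj, h⟩
      · rw [h, map_zero]; omega
      · rw [h, weight_single', one_mul]; exact hA j
    have h5 := hA t
    have h6 := ha t
    omega
  have wE_le : ∀ t, Finsupp.weight a (E t) ≤ A := by
    intro t
    rcases hE t with h | ⟨j, hj, h⟩
    · rw [h, map_zero]; omega
    · rw [h, weight_single', one_mul]; exact hA j
  have Ele1 : ∀ t x, (E t) x ≤ 1 := by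
    intro t x
    rcases hE t with h | ⟨j, hj, h⟩
    · rw [h]; simp
    · rw [h, Finsupp.single_apply]; split <;> omega
  set Γ : Set (Fin (n + 2) × ((Fin (n + 2)) →₀ ℕ)) :=
    {p | (Finsupp.weight a) p.2 = a p.1 ∧
          (p.2.prod fun j e => (c j : ℂ) ^ e) ≠ (c p.1 : ℂ)} with hΓ_def
  set Z : Set ((Fin (n + 2)) →₀ ℕ) :=
    {m | (Finsupp.weight a) m = d ∧ coeff m f = 0} with hZ_def
  have hsub1 : ∀ t, (k t - 1) * a t + a t = k t * a t := by
    intro t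
    have h := hk4 t
    have h2 : k t - 1 + 1 = k t := by omega
    calc (k t - 1) * a t + a t = ((k t - 1) + 1) * a t := by ring
      _ = k t * a t := by rw [h2]
  have hΓchi : ∀ p ∈ Γ, chiU c p.2 ≠ c p.1 := by
    intro p hp hc
    exact hp.2 (by rw [← chiU_coe, hc])
  -- the injection
  set g : (Fin (n + 2) × ((Fin (n + 2)) →₀ ℕ)) → ((Fin (n + 2)) →₀ ℕ) :=
    fun p => Finsupp.single p.1 (k p.1 - 1) + E p.1 + p.2 with hg_def
  have hgZ : ∀ p ∈ Γ, g p ∈ Z := by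
    rintro ⟨t, y⟩ hp
    have hw : Finsupp.weight a y = a t := hp.1
    refine ⟨?_, ?_⟩
    · show Finsupp.weight a (Finsupp.single t (k t - 1) + E t + y) = d
      rw [map_add, map_add, weight_single', hw]
      have h1 := hwP t
      have h2 := hsub1 t
      omega
    · show coeff (Finsupp.single t (k t - 1) + E t + y) f = 0
      by_contra hne
      have hχ := hsupp _ hne
      rw [chiU_add, chiU_add, chiU_single] at hχ
      rw [← hcP t] at hχ
      have h3 : (c t : ℂˣ) ^ k t = (c t) ^ (k t - 1) * (c t) ^ 1 := by
        rw [← pow_add]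
        congr 1
        have := hk4 t
        omega
      rw [h3] at hχ
      have h7 : (c t : ℂˣ) ^ (k t - 1) * (c t) ^ 1 * chiU c (E t)
          = (c t) ^ (k t - 1) * chiU c (E t) * (c t) := by
        rw [pow_one, mul_assoc, mul_comm (c t) (chiU c (E t)), ← mul_assoc]
      rw [h7] at hχ
      exact hΓchi ⟨t, y⟩ hp (mul_left_cancel hχ)
  have hginj : Set.InjOn g Γ := by
    rintro ⟨t, y⟩ hp ⟨t', y'⟩ hq' heq
    by_cases htt : t = t'
    · subst htt
      have : y = y' := by
        have h := heq
        simp only [hg_def] at h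
        exact add_left_cancel h
      rw [this]
    · exfalso
      have hco := DFunLike.congr_fun heq t
      simp only [hg_def, Finsupp.add_apply] at hco
      rw [Finsupp.single_eq_same] at hco
      rw [Finsupp.single_apply, if_neg (fun h => htt (h.symm)), zero_add] at hco
      -- hco : k t - 1 + (E t) t + y t = (E t') t + y' t
      have h1 : (k t - 1) * a t + (Finsupp.weight a (E t)) + a t = d := by
        have h2 := hsub1 t
        have := hwP t
        omega
      have h3 : (k t - 1) ≤ (E t') t + y' t := by omega
      have h4 : (k t - 1) * a t ≤ ((E t') t + y' t) * a t := Nat.mul_le_mul_right _ h3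
      have h5 : ((E t') t + y' t) * a t = (E t') t * a t + y' t * a t := by ring
      have h6 : (E t') t * a t ≤ 1 * a t := Nat.mul_le_mul_right _ (Ele1 t' t)
      have h7 : y' t * a t ≤ a t' := by
        have := coord_mul_le_weight a y' t
        rw [hq'.1] at this
        exact this
      have h8 := wE_le t
      have h9 := hA t
      have h10 := hA t'
      have h11 := ha t
      omega
  -- the extra monomial
  obtain ⟨⟨i, y⟩, hiy⟩ := hΓ
  obtain ⟨xm, hxw, hxc, hxfree⟩ := extra_exists a ha d A hA hd c c₀ k E hE hwP hcP i y
    hiy.1 (hΓchi ⟨i, y⟩ hiy)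
  have hxZ : xm ∈ Z := by
    refine ⟨hxw, ?_⟩
    by_contra hne
    exact hxc (hsupp _ hne)
  have hxnot : xm ∉ g '' Γ := by
    rintro ⟨⟨t, y'⟩, _, hgp⟩
    apply hxfree t
    rw [← hgp]
    exact self_le_add_right _ _
  -- finiteness
  have hΓfin : Γ.Finite := by
    have hfin : {m : (Fin (n+2)) →₀ ℕ | Finsupp.weight a m ≤ A}.Finite :=
      Finsupp.finite_of_nat_weight_le a (fun x => (ha x).ne') A
    apply Set.Finite.subset (Set.Finite.prod (Set.finite_univ (α := Fin (n+2))) hfin)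
    rintro ⟨t, y'⟩ hp
    exact ⟨Set.mem_univ _, by simp only [Set.mem_setOf_eq]; rw [hp.1]; exact hA t⟩
  have hZfin : Z.Finite := by
    have hfin : {m : (Fin (n+2)) →₀ ℕ | Finsupp.weight a m ≤ d}.Finite :=
      Finsupp.finite_of_nat_weight_le a (fun x => (ha x).ne') d
    apply Set.Finite.subset hfin
    intro m hm
    simp only [Set.mem_setOf_eq]
    rw [hm.1]
  -- count
  have hsub : insert xm (g '' Γ) ⊆ Z := by
    intro z hz
    rcases Set.mem_insert_iff.mp hz with h | ⟨p, hp, hgp⟩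
    · rw [h]; exact hxZ
    · rw [← hgp]; exact hgZ p hp
  have himfin : (g '' Γ).Finite := hΓfin.image g
  have hcard1 : (insert xm (g '' Γ)).ncard = (g '' Γ).ncard + 1 :=
    Set.ncard_insert_of_notMem hxnot himfin
  have hcard2 : (g '' Γ).ncard = Γ.ncard := Set.ncard_image_of_injOn hginj
  have hle := Set.ncard_le_ncard hsub hZfin
  omega

end
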